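/- If the dual solution set dsol(A,B) = {y} is a singleton, then the primal solution set psol(A,B) equals A^{−1}y ∩ B^{−1}(−y). -/
import Mathlib


open Pointwise InnerProductSpace

variable {X : Type*} [NormedAddCommGroup X] [InnerProductSpace ℝ X]

/-- A set-valued operator `A : X ⇉ X` is monotone. -/
def SVMonotone (A : X → Set X) : Prop :=
  ∀ ⦃x y u v : X⦄, u ∈ A x → v ∈ A y → 0 ≤ ⟪x - y, u - v⟫_ℝ

/-- A set-valued operator is maximally monotone. -/
def SVMaxMonotone (A : X → Set X) : Prop :=
  SVMonotone A ∧ ∀ x u : X, (∀ y v, v ∈ A y → 0 ≤ ⟪x - y, u - v⟫_ℝ) → u ∈ A x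

/-- Set-valued inverse. -/
def SVInv (A : X → Set X) : X → Set X := fun u => {x | u ∈ A x}

/-- `B^∨ = (−Id) ∘ B ∘ (−Id)`. -/
def SVVee (B : X → Set X) : X → Set X := fun x => -(B (-x))

/-- `B^{−∨} = (B⁻¹)^∨`. -/
def SVInvVee (B : X → Set X) : X → Set X := SVVee (SVInv B)

/-- Primal Attouch–Théra solutions: `zer (A + B)`. -/
def psol (A B : X → Set X) : Set X := {x | (0 : X) ∈ A x + B x}

/-- Dual Attouch–Théra solutions: `zer (A⁻¹ + B^{−∨})`. -/
def dsol (A B : X → Set X) : Set X := {y | (0 : X) ∈ SVInv A y + SVInvVee B y}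

/-- If `dsol (A, B) = {y}` then `psol (A, B) = A⁻¹ y ∩ B⁻¹ (−y)`. -/
theorem psol_eq_of_dsol_singleton (A B : X → Set X)
    (hA : SVMaxMonotone A) (hB : SVMaxMonotone B) (y : X)
    (hy : dsol A B = {y}) :
    psol A B = SVInv A y ∩ SVInv B (-y) := by
  ext x
  constructor
  · rintro hx
    obtain ⟨u, hu, v, hv, huv⟩ := hx
    have hvu : v = -u := by exact eq_neg_of_add_eq_zero_right huv
    have hud : u ∈ dsol A B := by
      refine ⟨x, hu, -x, ?_, add_neg_cancel x⟩
      simp only [SVInvVee, SVVee, Set.mem_neg, neg_neg, SVInv, Set.mem_setOf_eq]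
      rw [hvu] at hv; exact hv
    have : u = y := by rw [hy] at hud; exact hud
    subst this
    exact ⟨hu, hvu ▸ hv⟩
  · rintro ⟨h1, h2⟩
    exact ⟨y, h1, -y, h2, add_neg_cancel y⟩
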